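/- arXiv:0803.2373 — 2 statements merged into one kernel-verified Lean document; each statement's English description precedes it below -/
import Mathlib

section
/- There exist constants ε > 0 and C > 0 (depending only on r) such that: if the source condition x₀ − x† = F'(x†)*v holds for some v ∈ Y lying in the orthogonal complement of the kernel of F'(x†)*, and L‖v‖ ≤ ε, then for every integer k ≥ 0 the noise-free iterate x_k is well defined, lies in B_ρ(x†), and satisfies ‖x_k − x†‖ ≤ C α_k^{1/2} ‖v‖. -/
open ContinuousLinearMap RealInnerProductSpace Filter

/-- `(α I + T*T)⁻¹` as an operator on `X` (via `Ring.inverse`; for `α > 0` the operator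
`α I + T*T` is a unit, so this is the genuine inverse). -/
noncomputable def regInvX {X Y : Type*} [NormedAddCommGroup X] [InnerProductSpace ℝ X]
    [CompleteSpace X] [NormedAddCommGroup Y] [InnerProductSpace ℝ Y] [CompleteSpace Y]
    (α : ℝ) (T : X →L[ℝ] Y) : X →L[ℝ] X :=
  Ring.inverse (α • (1 : X →L[ℝ] X) + (adjoint T).comp T)

/-- `(α I + T T*)⁻¹` as an operator on `Y`. -/
noncomputable def regInvY {X Y : Type*} [NormedAddCommGroup X] [InnerProductSpace ℝ X]
    [CompleteSpace X] [NormedAddCommGroup Y] [InnerProductSpace ℝ Y] [CompleteSpace Y]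
    (α : ℝ) (T : X →L[ℝ] Y) : Y →L[ℝ] Y :=
  Ring.inverse (α • (1 : Y →L[ℝ] Y) + T.comp (adjoint T))

section Helpers
variable {X Y : Type*} [NormedAddCommGroup X] [InnerProductSpace ℝ X] [CompleteSpace X]
  [NormedAddCommGroup Y] [InnerProductSpace ℝ Y] [CompleteSpace Y]

lemma seg_norm_le {a b z : X} (hz : z ∈ segment ℝ a b) : ‖z - b‖ ≤ ‖a - b‖ := by
  obtain ⟨s, t, hs, ht, hst, rfl⟩ := hz
  have h : s • a + t • b - b = s • (a - b) := by
    have ht1 : t = 1 - s := by linarith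
    subst ht1
    rw [sub_smul, one_smul, smul_sub]; abel
  rw [h, norm_smul, Real.norm_eq_abs, abs_of_nonneg hs]
  nlinarith [norm_nonneg (a - b)]

lemma regOp_inner (α : ℝ) (T : X →L[ℝ] Y) (x : X) :
    ⟪(α • (1 : X →L[ℝ] X) + (adjoint T).comp T) x, x⟫ = α * ‖x‖ ^ 2 + ‖T x‖ ^ 2 := by
  rw [ContinuousLinearMap.add_apply, inner_add_left, ContinuousLinearMap.smul_apply,
    ContinuousLinearMap.one_apply, real_inner_smul_left, real_inner_self_eq_norm_sq,
    ContinuousLinearMap.comp_apply, adjoint_inner_left, real_inner_self_eq_norm_sq]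

lemma regOp_norm_le {α : ℝ} (hα : 0 < α) (T : X →L[ℝ] Y) (x : X) :
    α * ‖x‖ ≤ ‖(α • (1 : X →L[ℝ] X) + (adjoint T).comp T) x‖ := by
  rcases eq_or_ne x 0 with rfl | hx
  · simp
  · have h1 : α * ‖x‖ ^ 2 ≤ ⟪(α • (1 : X →L[ℝ] X) + (adjoint T).comp T) x, x⟫ := by
      rw [regOp_inner]; nlinarith [sq_nonneg ‖T x‖]
    have h2 := real_inner_le_norm ((α • (1 : X →L[ℝ] X) + (adjoint T).comp T) x) x
    have hxn : 0 < ‖x‖ := norm_pos_iff.mpr hx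
    nlinarith

lemma isUnit_regOp {α : ℝ} (hα : 0 < α) (T : X →L[ℝ] Y) :
    IsUnit (α • (1 : X →L[ℝ] X) + (adjoint T).comp T) := by
  set A : X →L[ℝ] X := α • (1 : X →L[ℝ] X) + (adjoint T).comp T with hA
  have hanti : AntilipschitzWith (⟨α⁻¹, by positivity⟩ : NNReal) A := by
    apply ContinuousLinearMap.antilipschitz_of_bound
    intro x
    have := regOp_norm_le hα T x
    rw [← hA] at this
    calc ‖x‖ = α⁻¹ * (α * ‖x‖) := by field_simp
    _ ≤ α⁻¹ * ‖A x‖ := by gcongr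
  have hker : LinearMap.ker (A : X →ₗ[ℝ] X) = ⊥ := by
    rw [LinearMap.ker_eq_bot]; exact hanti.injective
  have hclosed : IsClosed (LinearMap.range (A : X →ₗ[ℝ] X) : Set X) := by
    have := hanti.isClosed_range A.uniformContinuous
    convert this using 1
    exact LinearMap.coe_range _
  have hrange : LinearMap.range (A : X →ₗ[ℝ] X) = ⊤ := by
    haveI := hclosed.completeSpace_coe
    rw [← (LinearMap.range (A : X →ₗ[ℝ] X)).orthogonal_orthogonal]
    rw [Submodule.eq_top_iff']
    intro v w hw
    obtain rfl : w = 0 := by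
      have h0 : ⟪A w, w⟫ = 0 := hw _ ⟨w, rfl⟩
      have h1 : α * ‖w‖ ^ 2 + ‖T w‖ ^ 2 = 0 := by rw [← regOp_inner α T w, ← hA, h0]
      have h2 : ‖w‖ ^ 2 = 0 := le_antisymm (by nlinarith [sq_nonneg ‖T w‖]) (sq_nonneg _)
      have := pow_eq_zero_iff (n := 2) (by norm_num) |>.mp h2
      simpa using this
    exact inner_zero_left _
  let e : X ≃L[ℝ] X := ContinuousLinearEquiv.ofBijective A hker hrange
  have he : ∀ x, e x = A x := fun x => rfl
  refine ⟨⟨A, e.symm.toContinuousLinearMap, ?_, ?_⟩, rfl⟩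
  · ext x
    simp only [ContinuousLinearMap.mul_apply, ContinuousLinearMap.one_apply,
      ContinuousLinearEquiv.coe_coe]
    rw [← he]
    exact e.apply_symm_apply x
  · ext x
    simp only [ContinuousLinearMap.mul_apply, ContinuousLinearMap.one_apply,
      ContinuousLinearEquiv.coe_coe]
    rw [← he]
    exact e.symm_apply_apply x

lemma regInvX_regOp {α : ℝ} (hα : 0 < α) (T : X →L[ℝ] Y) (x : X) :
    regInvX α T ((α • (1 : X →L[ℝ] X) + (adjoint T).comp T) x) = x := by
  have h := isUnit_regOp (X := X) (Y := Y) hα T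
  have : regInvX α T * (α • (1 : X →L[ℝ] X) + (adjoint T).comp T) = 1 :=
    Ring.inverse_mul_cancel _ h
  calc regInvX α T ((α • (1 : X →L[ℝ] X) + (adjoint T).comp T) x)
      = (regInvX α T * (α • (1 : X →L[ℝ] X) + (adjoint T).comp T)) x := rfl
    _ = x := by rw [this]; rfl

lemma regOp_regInvX {α : ℝ} (hα : 0 < α) (T : X →L[ℝ] Y) (x : X) :
    (α • (1 : X →L[ℝ] X) + (adjoint T).comp T) (regInvX α T x) = x := by
  have h := isUnit_regOp (X := X) (Y := Y) hα T
  have : (α • (1 : X →L[ℝ] X) + (adjoint T).comp T) * regInvX α T = 1 :=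
    Ring.mul_inverse_cancel _ h
  calc (α • (1 : X →L[ℝ] X) + (adjoint T).comp T) (regInvX α T x)
      = ((α • (1 : X →L[ℝ] X) + (adjoint T).comp T) * regInvX α T) x := rfl
    _ = x := by rw [this]; rfl

lemma regInvX_bound1 {α : ℝ} (hα : 0 < α) (T : X →L[ℝ] Y) (x : X) :
    α * ‖regInvX α T x‖ ≤ ‖x‖ := by
  have := regOp_norm_le hα T (regInvX α T x)
  rwa [regOp_regInvX hα] at this

lemma regInvX_bound2 {α : ℝ} (hα : 0 < α) (T : X →L[ℝ] Y) (w : Y) :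
    2 * Real.sqrt α * ‖regInvX α T (adjoint T w)‖ ≤ ‖w‖ := by
  set u := regInvX α T (adjoint T w) with hu
  have key : α * ‖u‖ ^ 2 + ‖T u‖ ^ 2 = ⟪w, T u⟫ := by
    rw [← regOp_inner α T u, regOp_regInvX hα, adjoint_inner_left]
  have h2 : α * ‖u‖ ^ 2 + ‖T u‖ ^ 2 ≤ ‖w‖ * ‖T u‖ := key.le.trans (real_inner_le_norm _ _)
  have h4 : 4 * (α * ‖u‖ ^ 2) ≤ ‖w‖ ^ 2 := by nlinarith [sq_nonneg (‖w‖ - 2 * ‖T u‖)]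
  have hl : (2 * Real.sqrt α * ‖u‖) ^ 2 ≤ ‖w‖ ^ 2 := by
    have : Real.sqrt α ^ 2 = α := Real.sq_sqrt hα.le
    nlinarith
  have h5 : 0 ≤ 2 * Real.sqrt α * ‖u‖ := by positivity
  calc 2 * Real.sqrt α * ‖u‖ = Real.sqrt ((2 * Real.sqrt α * ‖u‖) ^ 2) := (Real.sqrt_sq h5).symm
    _ ≤ Real.sqrt (‖w‖ ^ 2) := Real.sqrt_le_sqrt hl
    _ = ‖w‖ := Real.sqrt_sq (norm_nonneg w)

end Helpers

set_option maxHeartbeats 1600000 in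
/-- Lemma 3.1, first part: the noise-free iterates `x_k` stay in the ball `B_ρ(x†)` and
satisfy `‖x_k - x†‖ ≤ C α_k^{1/2} ‖v‖`; the constants `ε`, `C` depend only on `r`. -/
theorem stmt7 {X Y : Type*} [NormedAddCommGroup X] [InnerProductSpace ℝ X] [CompleteSpace X]
    [NormedAddCommGroup Y] [InnerProductSpace ℝ Y] [CompleteSpace Y]
    (r : ℝ) (hr : 1 < r) :
    ∃ ε > 0, ∃ C > 0,
      ∀ (ρ L : ℝ) (α : ℕ → ℝ) (F : X → Y) (F' : X → X →L[ℝ] Y) (xdag x₀ : X) (y : Y),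
      F xdag = y →
      4 * ‖x₀ - xdag‖ < ρ →
      (∀ x ∈ Metric.closedBall xdag ρ, HasFDerivAt F (F' x) x) →
      (∀ x ∈ Metric.closedBall xdag ρ, ∀ z ∈ Metric.closedBall xdag ρ,
        ‖F' x - F' z‖ ≤ L * ‖x - z‖) →
      (∀ x ∈ Metric.closedBall xdag ρ, ‖F' x‖ ≤ Real.sqrt (α 0)) →
      (∀ k, 0 < α k) →
      (∀ k, 1 ≤ α k / α (k + 1) ∧ α k / α (k + 1) ≤ r) →
      Tendsto α atTop (nhds 0) →
      ∀ v : Y, v ∈ (LinearMap.ker (adjoint (F' xdag) : Y →ₗ[ℝ] X))ᗮ →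
      x₀ - xdag = adjoint (F' xdag) v → L * ‖v‖ ≤ ε →
      ∀ xf : ℕ → X, xf 0 = x₀ →
      (∀ k, xf (k + 1) = xf k - regInvX (α k) (F' (xf k))
        ((adjoint (F' (xf k))) (F (xf k) - y) + α k • (xf k - x₀))) →
      ∀ k : ℕ, xf k ∈ Metric.closedBall xdag ρ ∧
        ‖xf k - xdag‖ ≤ C * Real.sqrt (α k) * ‖v‖ := by
  have hr0 : (0:ℝ) < r := lt_trans one_pos hr
  set sr := Real.sqrt r with hsr
  have hsr1 : 1 ≤ sr := by
    rw [hsr, show (1:ℝ) = Real.sqrt 1 by simp]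
    exact Real.sqrt_le_sqrt hr.le
  have hsrpos : 0 < sr := lt_of_lt_of_le one_pos hsr1
  have hsr2 : sr ^ 2 = r := Real.sq_sqrt hr0.le
  have hden : 0 < 2 * sr + r := by positivity
  set ε := 1 / (2 * sr + r) with hε
  have hεpos : 0 < ε := by positivity
  have hεsr : ε * sr ≤ 1 / 2 := by
    rw [hε, div_mul_eq_mul_div, one_mul, div_le_div_iff₀ hden (by norm_num)]
    nlinarith
  have hεhalf : ε * (sr + r / 2) = 1 / 2 := by
    rw [hε]; field_simp
  refine ⟨ε, hεpos, sr, hsrpos, ?_⟩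
  intro ρ L α F F' xdag x₀ y hy hρ4 hder hLip hscale hαpos hαr _hαtend v _hv hsrc hLv xf hxf0 hrec
  set L' := max L 0 with hL'
  have hL'0 : 0 ≤ L' := le_max_right _ _
  have hLip' : ∀ x ∈ Metric.closedBall xdag ρ, ∀ z ∈ Metric.closedBall xdag ρ,
      ‖F' x - F' z‖ ≤ L' * ‖x - z‖ := fun x hx z hz =>
    (hLip x hx z hz).trans (mul_le_mul_of_nonneg_right (le_max_left _ _) (norm_nonneg _))
  have hLv' : L' * ‖v‖ ≤ ε := by
    rcases le_total L 0 with h | h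
    · rw [hL', max_eq_right h, zero_mul]; exact hεpos.le
    · rwa [hL', max_eq_left h]
  have hρ0 : 0 < ρ := lt_of_le_of_lt (by positivity) hρ4
  have hxdagball : xdag ∈ Metric.closedBall xdag ρ := Metric.mem_closedBall_self hρ0.le
  set T := F' xdag with hT
  have he0 : ‖x₀ - xdag‖ ≤ Real.sqrt (α 0) * ‖v‖ := by
    rw [hsrc]
    calc ‖adjoint T v‖ ≤ ‖adjoint T‖ * ‖v‖ := le_opNorm _ _
      _ = ‖T‖ * ‖v‖ := by rw [adjoint.norm_map]
      _ ≤ Real.sqrt (α 0) * ‖v‖ :=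
          mul_le_mul_of_nonneg_right (hscale xdag hxdagball) (norm_nonneg _)
  have main : ∀ k, ‖xf k - xdag‖ ≤ sr * Real.sqrt (α k) * ‖v‖ ∧
      ‖xf k - xdag‖ ≤ 2 * ‖x₀ - xdag‖ := by
    intro k
    induction k with
    | zero =>
      rw [hxf0]
      refine ⟨?_, by nlinarith [norm_nonneg (x₀ - xdag)]⟩
      calc ‖x₀ - xdag‖ ≤ Real.sqrt (α 0) * ‖v‖ := he0
        _ = 1 * (Real.sqrt (α 0) * ‖v‖) := (one_mul _).symm
        _ ≤ sr * (Real.sqrt (α 0) * ‖v‖) := by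
            apply mul_le_mul_of_nonneg_right hsr1 (by positivity)
        _ = sr * Real.sqrt (α 0) * ‖v‖ := by ring
    | succ k ih =>
      obtain ⟨ih1, ih2⟩ := ih
      have hαk := hαpos k
      have hsαk : 0 < Real.sqrt (α k) := Real.sqrt_pos.mpr hαk
      have hsαk0 : (0:ℝ) ≤ Real.sqrt (α k) := hsαk.le
      have hsα2 : Real.sqrt (α k) ^ 2 = α k := Real.sq_sqrt hαk.le
      have hball_k : xf k ∈ Metric.closedBall xdag ρ := by
        rw [Metric.mem_closedBall, dist_eq_norm]; linarith
      set Tk := F' (xf k) with hTk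
      set ek := xf k - xdag with hek
      -- Taylor remainder
      set R := Tk ek - (F (xf k) - y) with hR
      have hseg : segment ℝ xdag (xf k) ⊆ Metric.closedBall xdag ρ :=
        (convex_closedBall _ _).segment_subset hxdagball hball_k
      have hekrev : ‖xdag - xf k‖ = ‖ek‖ := by rw [hek, norm_sub_rev]
      have hTaylor : ‖F xdag - F (xf k) - Tk (xdag - xf k)‖ ≤ (L' * ‖ek‖) * ‖xdag - xf k‖ := by
        apply Convex.norm_image_sub_le_of_norm_hasFDerivWithin_le' (f' := F')
          (fun z hz => (hder z (hseg hz)).hasFDerivWithinAt)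
          (fun z hz => ?_) (convex_segment _ _)
          (right_mem_segment ℝ xdag (xf k)) (left_mem_segment ℝ xdag (xf k))
        calc ‖F' z - Tk‖ ≤ L' * ‖z - xf k‖ := hLip' z (hseg hz) (xf k) hball_k
          _ ≤ L' * ‖ek‖ := by
              apply mul_le_mul_of_nonneg_left _ hL'0
              rw [← hekrev]; exact seg_norm_le hz
      have hneg : xdag - xf k = -ek := by rw [hek]; abel
      have hRb : ‖R‖ ≤ L' * ‖ek‖ ^ 2 := by
        have hReq : R = F xdag - F (xf k) - Tk (xdag - xf k) := by
          rw [hR, hneg, map_neg, hy]; abel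
        rw [hReq]
        refine hTaylor.trans ?_
        rw [hneg, norm_neg]
        exact le_of_eq (by ring)
      -- the key identity
      have hid : xf (k+1) - xdag =
          regInvX (α k) Tk (adjoint Tk R) + (α k) • regInvX (α k) Tk (x₀ - xdag) := by
        have harg : adjoint Tk R + (α k) • (x₀ - xdag)
            = ((α k) • (1 : X →L[ℝ] X) + (adjoint Tk).comp Tk) ek
              - (adjoint Tk (F (xf k) - y) + (α k) • (xf k - x₀)) := by
          rw [hR, map_sub]
          simp only [ContinuousLinearMap.add_apply, ContinuousLinearMap.smul_apply,
            ContinuousLinearMap.one_apply, ContinuousLinearMap.comp_apply]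
          rw [hek]
          module
        have h2 : regInvX (α k) Tk (adjoint Tk R + (α k) • (x₀ - xdag))
            = ek - regInvX (α k) Tk (adjoint Tk (F (xf k) - y) + (α k) • (xf k - x₀)) := by
          rw [harg, map_sub, regInvX_regOp hαk]
        rw [hrec k, sub_right_comm, ← hek, ← h2, map_add, map_smul]
      -- splitting x₀ - xdag via the source condition
      set w := adjoint T v - adjoint Tk v with hw
      have hsplit : (α k) • regInvX (α k) Tk (x₀ - xdag)
          = (α k) • regInvX (α k) Tk (adjoint Tk v) + (α k) • regInvX (α k) Tk w := by
        rw [hsrc, show adjoint T v = adjoint Tk v + w by rw [hw]; abel, map_add, smul_add]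
      have hwb : ‖w‖ ≤ L' * ‖ek‖ * ‖v‖ := by
        have h1 : w = (adjoint T - adjoint Tk) v := by
          rw [hw, ContinuousLinearMap.sub_apply]
        have h2 : ‖adjoint T - adjoint Tk‖ = ‖T - Tk‖ := by
          rw [← map_sub]; exact adjoint.norm_map _
        calc ‖w‖ = ‖(adjoint T - adjoint Tk) v‖ := by rw [h1]
          _ ≤ ‖adjoint T - adjoint Tk‖ * ‖v‖ := le_opNorm _ _
          _ = ‖T - Tk‖ * ‖v‖ := by rw [h2]
          _ ≤ (L' * ‖ek‖) * ‖v‖ := by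
              refine mul_le_mul_of_nonneg_right ?_ (norm_nonneg v)
              have := hLip' xdag hxdagball (xf k) hball_k
              rwa [hekrev] at this
          _ = L' * ‖ek‖ * ‖v‖ := by ring
      -- operator norm estimates
      have na1 := regInvX_bound2 hαk Tk R
      have na2 := regInvX_bound2 hαk Tk v
      have na3 := regInvX_bound1 hαk Tk w
      have nb := regInvX_bound1 hαk Tk (x₀ - xdag)
      have hnsm : ∀ z : X, ‖(α k) • z‖ = α k * ‖z‖ := fun z => by
        rw [norm_smul, Real.norm_eq_abs, abs_of_pos hαk]
      set a1 := ‖regInvX (α k) Tk (adjoint Tk R)‖ with ha1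
      set a2 := ‖regInvX (α k) Tk (adjoint Tk v)‖ with ha2
      set a3 := ‖regInvX (α k) Tk w‖ with ha3
      have ha1nn : 0 ≤ a1 := norm_nonneg _
      have ha2nn : 0 ≤ a2 := norm_nonneg _
      have ha3nn : 0 ≤ a3 := norm_nonneg _
      -- second invariant : stay within 2‖x₀ - xdag‖
      have g2 : ‖xf (k+1) - xdag‖ ≤ 2 * ‖x₀ - xdag‖ := by
        have hb : ‖xf (k+1) - xdag‖ ≤ a1 + α k * ‖regInvX (α k) Tk (x₀ - xdag)‖ := by
          calc ‖xf (k+1) - xdag‖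
              = ‖regInvX (α k) Tk (adjoint Tk R) + (α k) • regInvX (α k) Tk (x₀ - xdag)‖ := by
                rw [hid]
            _ ≤ a1 + ‖(α k) • regInvX (α k) Tk (x₀ - xdag)‖ := norm_add_le _ _
            _ = a1 + α k * ‖regInvX (α k) Tk (x₀ - xdag)‖ := by rw [hnsm]
        have hek2 : ‖ek‖ ^ 2 ≤ (sr * Real.sqrt (α k) * ‖v‖) * (2 * ‖x₀ - xdag‖) := by
          nlinarith [norm_nonneg ek]
        have h5 : 2 * Real.sqrt (α k) * a1
            ≤ 2 * Real.sqrt (α k) * (ε * sr * ‖x₀ - xdag‖) := by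
          refine na1.trans (hRb.trans ?_)
          have h6 : L' * ‖ek‖ ^ 2 ≤ L' * ((sr * Real.sqrt (α k) * ‖v‖) * (2 * ‖x₀ - xdag‖)) :=
            mul_le_mul_of_nonneg_left hek2 hL'0
          refine h6.trans ?_
          have h7 : L' * ((sr * Real.sqrt (α k) * ‖v‖) * (2 * ‖x₀ - xdag‖))
              = 2 * Real.sqrt (α k) * ((L' * ‖v‖) * (sr * ‖x₀ - xdag‖)) := by ring
          rw [h7]
          refine mul_le_mul_of_nonneg_left ?_ (by positivity)
          exact le_trans (mul_le_mul_of_nonneg_right hLv' (by positivity))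
            (le_of_eq (by ring))
        have ha1b : a1 ≤ ε * sr * ‖x₀ - xdag‖ :=
          (mul_le_mul_iff_of_pos_left (by positivity : (0:ℝ) < 2 * Real.sqrt (α k))).mp h5
        have h8 : ε * sr * ‖x₀ - xdag‖ ≤ (1/2) * ‖x₀ - xdag‖ :=
          mul_le_mul_of_nonneg_right hεsr (norm_nonneg _)
        have h9 := nb
        have hnn := norm_nonneg (x₀ - xdag)
        linarith
      -- first invariant
      have hg1 : ‖xf (k+1) - xdag‖ ≤ a1 + α k * a2 + α k * a3 := by
        calc ‖xf (k+1) - xdag‖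
            = ‖regInvX (α k) Tk (adjoint Tk R) + ((α k) • regInvX (α k) Tk (adjoint Tk v)
                + (α k) • regInvX (α k) Tk w)‖ := by rw [hid, hsplit]
          _ ≤ a1 + ‖(α k) • regInvX (α k) Tk (adjoint Tk v) + (α k) • regInvX (α k) Tk w‖ :=
              norm_add_le _ _
          _ ≤ a1 + (‖(α k) • regInvX (α k) Tk (adjoint Tk v)‖
                + ‖(α k) • regInvX (α k) Tk w‖) :=
              add_le_add_right (norm_add_le _ _) _
          _ = a1 + α k * a2 + α k * a3 := by rw [hnsm, hnsm]; ring
      have hek1 : ‖ek‖ ^ 2 ≤ (sr * Real.sqrt (α k) * ‖v‖) ^ 2 :=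
        pow_le_pow_left₀ (norm_nonneg ek) ih1 2
      have h8 : 2 * Real.sqrt (α k) * a1
          ≤ 2 * Real.sqrt (α k) * (ε * r * Real.sqrt (α k) * ‖v‖ / 2) := by
        refine na1.trans (hRb.trans ?_)
        have h9 : L' * ‖ek‖ ^ 2 ≤ L' * (sr * Real.sqrt (α k) * ‖v‖) ^ 2 :=
          mul_le_mul_of_nonneg_left hek1 hL'0
        refine h9.trans ?_
        have h10 : L' * (sr * Real.sqrt (α k) * ‖v‖) ^ 2
            = (L' * ‖v‖) * (sr ^ 2 * Real.sqrt (α k) ^ 2 * ‖v‖) := by ring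
        have h11 : (L' * ‖v‖) * (sr ^ 2 * Real.sqrt (α k) ^ 2 * ‖v‖)
            ≤ ε * (sr ^ 2 * Real.sqrt (α k) ^ 2 * ‖v‖) :=
          mul_le_mul_of_nonneg_right hLv' (by positivity)
        rw [h10]
        refine h11.trans (le_of_eq ?_)
        rw [hsr2]; ring
      have ta1 : a1 ≤ ε * r * Real.sqrt (α k) * ‖v‖ / 2 :=
        (mul_le_mul_iff_of_pos_left (by positivity : (0:ℝ) < 2 * Real.sqrt (α k))).mp h8
      have ta2 : α k * a2 ≤ Real.sqrt (α k) * ‖v‖ / 2 := by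
        nlinarith [mul_le_mul_of_nonneg_left na2 hsαk0, hsα2]
      have h12 : L' * ‖ek‖ * ‖v‖ ≤ (L' * ‖v‖) * (sr * Real.sqrt (α k) * ‖v‖) := by
        have h13 : L' * ‖ek‖ ≤ L' * (sr * Real.sqrt (α k) * ‖v‖) :=
          mul_le_mul_of_nonneg_left ih1 hL'0
        calc L' * ‖ek‖ * ‖v‖ ≤ (L' * (sr * Real.sqrt (α k) * ‖v‖)) * ‖v‖ :=
              mul_le_mul_of_nonneg_right h13 (norm_nonneg v)
          _ = (L' * ‖v‖) * (sr * Real.sqrt (α k) * ‖v‖) := by ring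
      have ta3 : α k * a3 ≤ ε * (sr * Real.sqrt (α k) * ‖v‖) :=
        na3.trans (hwb.trans (h12.trans (mul_le_mul_of_nonneg_right hLv' (by positivity))))
      have hkey : ε * r * Real.sqrt (α k) * ‖v‖ / 2 + Real.sqrt (α k) * ‖v‖ / 2
          + ε * (sr * Real.sqrt (α k) * ‖v‖) = Real.sqrt (α k) * ‖v‖ := by
        linear_combination (Real.sqrt (α k) * ‖v‖) * hεhalf
      have htot : ‖xf (k+1) - xdag‖ ≤ Real.sqrt (α k) * ‖v‖ := by linarith
      have hαle : α k ≤ r * α (k+1) := by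
        have h := (hαr k).2
        rw [div_le_iff₀ (hαpos (k+1))] at h
        linarith
      have hsm : Real.sqrt (α k) ≤ sr * Real.sqrt (α (k+1)) := by
        rw [hsr, ← Real.sqrt_mul hr0.le]
        exact Real.sqrt_le_sqrt hαle
      refine ⟨htot.trans ?_, g2⟩
      calc Real.sqrt (α k) * ‖v‖ ≤ (sr * Real.sqrt (α (k+1))) * ‖v‖ :=
            mul_le_mul_of_nonneg_right hsm (norm_nonneg v)
        _ = sr * Real.sqrt (α (k+1)) * ‖v‖ := by ring
  intro k
  obtain ⟨h1, h2⟩ := main k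
  refine ⟨?_, h1⟩
  rw [Metric.mem_closedBall, dist_eq_norm]
  linarith
end

section
/- Let X be a real Hilbert space, A a bounded nonnegative selfadjoint operator on X, and x ∈ X. Then for all real numbers 0 < α ≤ α' one has ‖α (α I + A)^{-1} x‖ ≤ ‖α' (α' I + A)^{-1} x‖ and ‖α' (α' I + A)^{-1} x‖ ≤ (α'/α) ‖α (α I + A)^{-1} x‖. -/
open ContinuousLinearMap RealInnerProductSpace

lemma aux_isUnit {X : Type*} [NormedAddCommGroup X] [InnerProductSpace ℝ X] [CompleteSpace X]
    (A : X →L[ℝ] X) (hApos : ∀ u : X, 0 ≤ ⟪A u, u⟫) {β : ℝ} (hβ : 0 < β) :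
    IsUnit (β • (1 : X →L[ℝ] X) + A) := by
  set T := β • (1 : X →L[ℝ] X) + A with hT
  have hB : IsCoercive ((innerSL ℝ).comp T) := by
    refine ⟨β, hβ, fun u => ?_⟩
    have : ((innerSL ℝ).comp T) u u = β * ⟪u, u⟫ + ⟪A u, u⟫ := by
      simp [hT, inner_add_left, real_inner_smul_left]
    rw [this, real_inner_self_eq_norm_mul_norm]
    nlinarith [hApos u]
  let e := hB.continuousLinearEquivOfBilin
  have hTe : ∀ v, T v = e v := fun v =>
    hB.unique_continuousLinearEquivOfBilin (fun w => rfl)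
  exact ⟨(ContinuousLinearEquiv.unitsEquiv ℝ X).symm e, by ext v; exact (hTe v).symm⟩

/-- For a bounded nonnegative selfadjoint operator `A` and `0 < α ≤ α'`, the quantity
`β(α) = ‖α (α I + A)⁻¹ x‖` is monotone: `β(α) ≤ β(α')` and `β(α') ≤ (α'/α) β(α)`. -/
theorem stmt14 {X : Type*} [NormedAddCommGroup X] [InnerProductSpace ℝ X] [CompleteSpace X]
    (A : X →L[ℝ] X) (hA : IsSelfAdjoint A) (hApos : ∀ u : X, 0 ≤ ⟪A u, u⟫)
    (x : X) (α α' : ℝ) (hα : 0 < α) (hαα' : α ≤ α') :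
    ‖α • Ring.inverse (α • (1 : X →L[ℝ] X) + A) x‖ ≤
      ‖α' • Ring.inverse (α' • (1 : X →L[ℝ] X) + A) x‖ ∧
    ‖α' • Ring.inverse (α' • (1 : X →L[ℝ] X) + A) x‖ ≤
      (α' / α) * ‖α • Ring.inverse (α • (1 : X →L[ℝ] X) + A) x‖ := by
  have hα' : 0 < α' := lt_of_lt_of_le hα hαα'
  set T := α • (1 : X →L[ℝ] X) + A with hTdef
  set T' := α' • (1 : X →L[ℝ] X) + A with hT'def
  have hU : IsUnit T := aux_isUnit A hApos hα
  have hU' : IsUnit T' := aux_isUnit A hApos hα'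
  set R := Ring.inverse T with hRdef
  set R' := Ring.inverse T' with hR'def
  have hRT : R * T = 1 := Ring.inverse_mul_cancel T hU
  have hTR : T * R = 1 := Ring.mul_inverse_cancel T hU
  have hT'R' : T' * R' = 1 := Ring.mul_inverse_cancel T' hU'
  -- T and T' commute
  have hmul : ∀ β β' : ℝ, (β • (1 : X →L[ℝ] X) + A) * (β' • (1 : X →L[ℝ] X) + A)
      = (β * β') • (1 : X →L[ℝ] X) + (β + β') • A + A * A := by
    intro β β'
    set_option synthInstance.maxHeartbeats 1000000 in
    simp only [mul_add, add_mul, smul_mul_assoc, mul_smul_comm, one_mul, mul_one,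
      smul_smul, add_smul, smul_add, mul_comm β' β]
    abel
  have hcommTT' : T * T' = T' * T := by
    rw [hTdef, hT'def, hmul, hmul, mul_comm α α', add_comm α α']
  -- R commutes with T'
  have hcommRT' : R * T' = T' * R := by
    calc R * T' = R * (T' * (T * R)) := by rw [hTR, mul_one]
    _ = R * ((T' * T) * R) := by rw [mul_assoc]
    _ = R * ((T * T') * R) := by rw [hcommTT']
    _ = (R * T) * (T' * R) := by simp only [mul_assoc]
    _ = T' * R := by rw [hRT, one_mul]
  set w := R (R' x) with hw
  have h1 : R x = T' w := by
    have : T' * (R * R') = R := by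
      calc T' * (R * R') = (T' * R) * R' := by rw [mul_assoc]
      _ = (R * T') * R' := by rw [hcommRT']
      _ = R * (T' * R') := by rw [mul_assoc]
      _ = R := by rw [hT'R', mul_one]
    have := congrArg (fun f : X →L[ℝ] X => f x) this
    simpa [ContinuousLinearMap.mul_apply] using this.symm
  have h2 : R' x = T w := by
    have : T * (R * R') = R' := by
      calc T * (R * R') = (T * R) * R' := by rw [mul_assoc]
      _ = R' := by rw [hTR, one_mul]
    have := congrArg (fun f : X →L[ℝ] X => f x) this
    simpa [ContinuousLinearMap.mul_apply] using this.symm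
  have h1' : R x = α' • w + A w := by
    rw [h1, hT'def]; simp
  have h2' : R' x = α • w + A w := by
    rw [h2, hTdef]; simp
  rw [h1', h2']
  -- norm computations
  have hb : 0 ≤ ⟪A w, w⟫ := hApos w
  have hexp : ∀ β : ℝ, 0 < β → ‖β • w + A w‖ ^ 2
      = β ^ 2 * ‖w‖ ^ 2 + 2 * β * ⟪A w, w⟫ + ‖A w‖ ^ 2 := by
    intro β hβ
    rw [norm_add_sq_real, norm_smul, real_inner_smul_left, real_inner_comm w (A w)]
    rw [Real.norm_eq_abs, abs_of_pos hβ]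
    ring
  have key : ∀ y z : X, ‖y‖ ^ 2 ≤ ‖z‖ ^ 2 → ‖y‖ ≤ ‖z‖ := by
    intro y z h
    have := Real.sqrt_le_sqrt h
    rwa [Real.sqrt_sq (norm_nonneg _), Real.sqrt_sq (norm_nonneg _)] at this
  constructor
  · apply key
    rw [norm_smul, norm_smul, mul_pow, mul_pow, hexp α hα, hexp α' hα',
      Real.norm_eq_abs, Real.norm_eq_abs, abs_of_pos hα, abs_of_pos hα']
    nlinarith [mul_nonneg (mul_nonneg (mul_nonneg hα.le hα'.le) (sub_nonneg.mpr hαα')) hb,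
      mul_nonneg (sub_nonneg.mpr ((pow_le_pow_left₀ hα.le hαα' 2 : α ^ 2 ≤ α' ^ 2)))
        (sq_nonneg ‖A w‖)]
  · have hn : ‖α • w + A w‖ ≤ ‖α' • w + A w‖ := by
      apply key
      rw [hexp α hα, hexp α' hα']
      nlinarith [mul_nonneg (sub_nonneg.mpr hαα') hb,
        mul_nonneg (sub_nonneg.mpr ((pow_le_pow_left₀ hα.le hαα' 2 : α ^ 2 ≤ α' ^ 2)))
          (sq_nonneg ‖w‖)]
    calc ‖α' • (α • w + A w)‖ = α' * ‖α • w + A w‖ := by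
          rw [norm_smul, Real.norm_eq_abs, abs_of_pos hα']
    _ ≤ α' * ‖α' • w + A w‖ := mul_le_mul_of_nonneg_left hn hα'.le
    _ = (α' / α) * (α * ‖α' • w + A w‖) := by field_simp
    _ = (α' / α) * ‖α • (α' • w + A w)‖ := by
          rw [norm_smul, Real.norm_eq_abs, abs_of_pos hα]
end
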